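/- arXiv:1308.6665 — 3 statements merged into one kernel-verified Lean document; each statement's English description precedes it below -/
import Mathlib

section
/- Absolute convergence of the bilateral ₁ψ₁ series: let 0<q<1 and let a,b,x be complex numbers with a ≠ 0, x ≠ 0, b ∉ {q^m : m ∈ ℤ, m ≥ 1}, and |b/a| < |x| < 1. Then the bilateral series ∑_{ν=-∞}^{∞} ((a)_ν/(b)_ν) x^ν converges absolutely (i.e. ∑_{ν∈ℤ} |(a)_ν/(b)_ν| |x|^ν < ∞). -/
/-- The infinite q-shifted factorial `(u)_∞ = ∏_{l=0}^∞ (1 - u q^l)`. -/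
noncomputable def qPochC (q u : ℂ) : ℂ := ∏' l : ℕ, (1 - u * q ^ l)

/-- The q-shifted factorial `(u)_ν = (u)_∞ / (u q^ν)_∞` for `ν ∈ ℤ`. -/
noncomputable def qPochIntC (q u : ℂ) (ν : ℤ) : ℂ := qPochC q u / qPochC q (u * q ^ ν)

open Filter Topology

section aux
variable {q : ℝ}

lemma hasProd_zero_of_exists_eq_zero' {f : ℕ → ℂ} (h : ∃ l, f l = 0) : HasProd f 0 := by
  obtain ⟨l₀, h0⟩ := h
  have heq : (fun s : Finset ℕ => ∏ i ∈ s, f i) =ᶠ[atTop] fun _ => (0 : ℂ) := by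
    filter_upwards [eventually_ge_atTop {l₀}] with s hs
    exact Finset.prod_eq_zero (Finset.singleton_subset_iff.mp hs) h0
  exact Tendsto.congr' heq.symm tendsto_const_nhds

section q
variable {q : ℝ}

lemma summable_log_aux (hq0 : 0 < q) (hq1 : q < 1) (u : ℂ) :
    Summable (fun l : ℕ => Complex.log (1 - u * (q:ℂ) ^ l)) := by
  have habs : ∀ l : ℕ, ‖u * (q:ℂ) ^ l‖ = ‖u‖ * q ^ l := by
    intro l
    rw [norm_mul, norm_pow, Complex.norm_real, Real.norm_eq_abs, abs_of_pos hq0]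
  have hsmall : ∀ᶠ l in atTop, ‖u‖ * q ^ l ≤ 1 / 2 := by
    have : Tendsto (fun l : ℕ => ‖u‖ * q ^ l) atTop (𝓝 (‖u‖ * 0)) :=
      (tendsto_pow_atTop_nhds_zero_of_lt_one hq0.le hq1).const_mul _
    rw [mul_zero] at this
    exact this.eventually_le_const (by norm_num)
  apply Summable.of_norm_bounded_eventually_nat (g := fun l => 3 / 2 * (‖u‖ * q ^ l))
  · exact ((summable_geometric_of_lt_one hq0.le hq1).mul_left _).mul_left _
  · filter_upwards [hsmall] with l hl
    have h1 : ‖-(u * (q:ℂ) ^ l)‖ ≤ 1 / 2 := by rwa [norm_neg, habs]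
    have := Complex.norm_log_one_add_half_le_self (z := -(u * (q:ℂ) ^ l)) (by
      simpa using h1)
    rw [show (1 : ℂ) + -(u * (q:ℂ) ^ l) = 1 - u * (q:ℂ) ^ l by ring] at this
    calc ‖Complex.log (1 - u * (q:ℂ) ^ l)‖ ≤ 3 / 2 * ‖-(u * (q:ℂ) ^ l)‖ := this
      _ = 3 / 2 * (‖u‖ * q ^ l) := by
          rw [norm_neg, habs]

lemma qPochC_ne_zero (hq0 : 0 < q) (hq1 : q < 1) (u : ℂ) (h : ∀ l : ℕ, 1 - u * (q:ℂ) ^ l ≠ 0) :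
    qPochC (q:ℂ) u ≠ 0 := by
  have key := Complex.cexp_tsum_eq_tprod (f := fun l : ℕ => 1 - u * (q:ℂ) ^ l) h
    (summable_log_aux hq0 hq1 u)
  have := key
  rw [qPochC, ← this]
  exact Complex.exp_ne_zero _

lemma multipliable_qPoch (hq0 : 0 < q) (hq1 : q < 1) (u : ℂ) :
    Multipliable (fun l : ℕ => 1 - u * (q:ℂ) ^ l) := by
  by_cases h : ∀ l : ℕ, 1 - u * (q:ℂ) ^ l ≠ 0
  · exact Complex.multipliable_of_summable_log (summable_log_aux hq0 hq1 u)
  · push_neg at h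
    exact (hasProd_zero_of_exists_eq_zero' h).multipliable

lemma qPochC_eq_zero_iff (hq0 : 0 < q) (hq1 : q < 1) (u : ℂ) :
    qPochC (q:ℂ) u = 0 ↔ ∃ l : ℕ, u * (q:ℂ) ^ l = 1 := by
  constructor
  · intro h
    by_contra hc
    push_neg at hc
    exact qPochC_ne_zero hq0 hq1 u
      (fun l => sub_ne_zero_of_ne fun he => hc l (by linear_combination -he)) h
  · rintro ⟨l, hl⟩
    exact (hasProd_zero_of_exists_eq_zero' ⟨l, by rw [hl, sub_self]⟩).tprod_eq

set_option maxHeartbeats 1000000 in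
lemma qPochC_shift (hq0 : 0 < q) (hq1 : q < 1) (u : ℂ) :
    qPochC (q:ℂ) u = (1 - u) * qPochC (q:ℂ) (u * (q:ℂ)) := by
  have h1 : (fun l : ℕ => 1 - u * (q:ℂ) * (q:ℂ) ^ l) = fun l : ℕ => 1 - u * (q:ℂ) ^ (l + 1) :=
    funext fun l => by ring
  have hm : Multipliable (fun n : ℕ => 1 - u * (q:ℂ) ^ (n + 1)) :=
    (multipliable_qPoch hq0 hq1 (u * (q:ℂ))).congr (fun n => by ring)
  unfold qPochC
  rw [h1, tprod_eq_zero_mul' hm]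
  norm_num

lemma qPochC_zpow_shift (hq0 : 0 < q) (hq1 : q < 1) (u : ℂ) (ν : ℤ) :
    qPochC (q:ℂ) (u * (q:ℂ) ^ ν) = (1 - u * (q:ℂ) ^ ν) * qPochC (q:ℂ) (u * (q:ℂ) ^ (ν + 1)) := by
  have hqc : (q:ℂ) ≠ 0 := Complex.ofReal_ne_zero.mpr hq0.ne'
  have := qPochC_shift hq0 hq1 (u * (q:ℂ) ^ ν)
  rwa [mul_assoc, ← zpow_add_one₀ hqc] at this

lemma qPochC_zpow_eq_zero_iff (hq0 : 0 < q) (hq1 : q < 1) (u : ℂ) (ν : ℤ) :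
    qPochC (q:ℂ) (u * (q:ℂ) ^ ν) = 0 ↔ ∃ l : ℕ, u * (q:ℂ) ^ (ν + l) = 1 := by
  have hqc : (q:ℂ) ≠ 0 := Complex.ofReal_ne_zero.mpr hq0.ne'
  rw [qPochC_eq_zero_iff hq0 hq1]
  have key : ∀ l : ℕ, u * (q:ℂ) ^ ν * (q:ℂ) ^ l = u * (q:ℂ) ^ (ν + l) := fun l => by
    rw [mul_assoc, ← zpow_natCast (q:ℂ) l, ← zpow_add₀ hqc]
  simp_rw [key]

lemma qPochIntC_rec (hq0 : 0 < q) (hq1 : q < 1) (u : ℂ) (ν : ℤ)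
    (h : u * (q:ℂ) ^ ν ≠ 1 ∨ qPochC (q:ℂ) u = 0) :
    qPochIntC (q:ℂ) u (ν + 1) = qPochIntC (q:ℂ) u ν * (1 - u * (q:ℂ) ^ ν) := by
  by_cases hP1 : qPochC (q:ℂ) (u * (q:ℂ) ^ (ν + 1)) = 0
  · simp [qPochIntC, qPochC_zpow_shift hq0 hq1 u ν, hP1]
  by_cases h1 : u * (q:ℂ) ^ ν = 1
  · rcases h with h | h
    · exact absurd h1 h
    · rw [qPochIntC, qPochIntC, h, zero_div, zero_div, zero_mul]
  have h1' : (1:ℂ) - u * (q:ℂ) ^ ν ≠ 0 := sub_ne_zero_of_ne (Ne.symm h1)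
  rw [qPochIntC, qPochIntC, qPochC_zpow_shift hq0 hq1 u ν]
  field_simp

end q

end aux

/-- Absolute convergence of the bilateral `₁ψ₁` series. -/
theorem one_psi_one_abs_convergence (q : ℝ) (hq0 : 0 < q) (hq1 : q < 1)
    (a b x : ℂ) (ha : a ≠ 0) (hx : x ≠ 0)
    (hb : ∀ m : ℤ, 1 ≤ m → b ≠ (q : ℂ) ^ m)
    (hx1 : ‖b / a‖ < ‖x‖) (hx2 : ‖x‖ < 1) :
    Summable (fun ν : ℤ =>
      ‖qPochIntC (q : ℂ) a ν / qPochIntC (q : ℂ) b ν‖ * ‖x‖ ^ ν) := by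
  have hqc : (q:ℂ) ≠ 0 := Complex.ofReal_ne_zero.mpr hq0.ne'
  have habs_q : ‖(q:ℂ)‖ = q := by rw [Complex.norm_real, Real.norm_eq_abs, abs_of_pos hq0]
  have hxabs : 0 < ‖x‖ := norm_pos_iff.mpr hx
  by_cases hPa : qPochC (q:ℂ) a = 0
  · refine summable_zero.congr fun ν => ?_
    simp [qPochIntC, hPa]
  by_cases hPb : qPochC (q:ℂ) b = 0
  · refine summable_zero.congr fun ν => ?_
    simp [qPochIntC, hPb]
  set t : ℤ → ℝ := fun ν =>
    ‖qPochIntC (q : ℂ) a ν / qPochIntC (q : ℂ) b ν‖ * ‖x‖ ^ ν with ht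
  have htnonneg : ∀ ν : ℤ, 0 ≤ t ν := fun ν =>
    mul_nonneg (norm_nonneg _) (zpow_nonneg (norm_nonneg x) ν)
  -- b is never an integer power of q
  have hbq : ∀ ν : ℤ, b * (q:ℂ) ^ ν ≠ 1 := by
    intro ν h
    rcases le_or_gt 0 ν with hν | hν
    · apply hPb
      rw [qPochC_eq_zero_iff hq0 hq1]
      exact ⟨ν.toNat, by rwa [← zpow_natCast (q:ℂ), Int.toNat_of_nonneg hν]⟩
    · apply hb (-ν) (by omega)
      have h2 : b * (q:ℂ) ^ ν * (q:ℂ) ^ (-ν) = (q:ℂ) ^ (-ν) := by rw [h, one_mul]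
      rwa [mul_assoc, ← zpow_add₀ hqc, add_neg_cancel, zpow_zero, mul_one] at h2
  have haq_nonneg : ∀ ν : ℤ, 0 ≤ ν → a * (q:ℂ) ^ ν ≠ 1 := by
    intro ν hν h
    apply hPa
    rw [qPochC_eq_zero_iff hq0 hq1]
    exact ⟨ν.toNat, by rwa [← zpow_natCast (q:ℂ), Int.toNat_of_nonneg hν]⟩
  have hPbd : ∀ ν : ℤ, qPochC (q:ℂ) (b * (q:ℂ) ^ ν) ≠ 0 := by
    intro ν h
    rw [qPochC_zpow_eq_zero_iff hq0 hq1] at h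
    obtain ⟨l, hl⟩ := h
    exact hbq _ hl
  have hIb : ∀ ν : ℤ, qPochIntC (q:ℂ) b ν ≠ 0 := fun ν => div_ne_zero hPb (hPbd ν)
  have recb : ∀ ν : ℤ,
      qPochIntC (q:ℂ) b (ν + 1) = qPochIntC (q:ℂ) b ν * (1 - b * (q:ℂ) ^ ν) :=
    fun ν => qPochIntC_rec hq0 hq1 b ν (Or.inl (hbq ν))
  -- the key step identity
  have key : ∀ ν : ℤ, (a * (q:ℂ) ^ ν ≠ 1 ∨ qPochC (q:ℂ) a = 0) →
      t (ν + 1) = t ν *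
        (‖1 - a * (q:ℂ) ^ ν‖ / ‖1 - b * (q:ℂ) ^ ν‖ * ‖x‖) := by
    intro ν hν
    have ra := qPochIntC_rec hq0 hq1 a ν hν
    have rb := recb ν
    have h1b : ‖1 - b * (q:ℂ) ^ ν‖ ≠ 0 :=
      norm_ne_zero_iff.mpr (sub_ne_zero_of_ne (Ne.symm (hbq ν)))
    have hIb' : ‖qPochIntC (q:ℂ) b ν‖ ≠ 0 := norm_ne_zero_iff.mpr (hIb ν)
    rw [ht]
    simp only [ra, rb]
    rw [norm_div, norm_div, norm_mul, norm_mul, zpow_add_one₀ hxabs.ne']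
    field_simp
  -- positive side
  have hq0' : Tendsto (fun n : ℕ => (q:ℂ) ^ (n : ℤ)) atTop (𝓝 0) := by
    simp_rw [zpow_natCast]
    exact tendsto_pow_atTop_nhds_zero_of_norm_lt_one
      (by rw [habs_q]; exact hq1)
  have Spos : Summable (fun n : ℕ => t (n : ℤ)) := by
    apply summable_of_ratio_norm_eventually_le (r := (‖x‖ + 1) / 2) (by linarith)
    have h1a : Tendsto (fun n : ℕ => ‖1 - a * (q:ℂ) ^ (n : ℤ)‖) atTop (𝓝 1) := by
      have := (continuous_norm.tendsto 1).comp
        (by simpa using tendsto_const_nhds.sub (hq0'.const_mul a) :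
          Tendsto (fun n : ℕ => 1 - a * (q:ℂ) ^ (n : ℤ)) atTop (𝓝 1))
      simpa [Function.comp_def] using this
    have h1b : Tendsto (fun n : ℕ => ‖1 - b * (q:ℂ) ^ (n : ℤ)‖) atTop (𝓝 1) := by
      have := (continuous_norm.tendsto 1).comp
        (by simpa using tendsto_const_nhds.sub (hq0'.const_mul b) :
          Tendsto (fun n : ℕ => 1 - b * (q:ℂ) ^ (n : ℤ)) atTop (𝓝 1))
      simpa [Function.comp_def] using this
    have hlim : Tendsto (fun n : ℕ =>
        ‖1 - a * (q:ℂ) ^ (n : ℤ)‖ / ‖1 - b * (q:ℂ) ^ (n : ℤ)‖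
          * ‖x‖) atTop (𝓝 (‖x‖)) := by
      simpa using (h1a.div h1b one_ne_zero).mul_const (‖x‖)
    have hev := hlim.eventually_lt_const
      (show ‖x‖ < (‖x‖ + 1) / 2 by linarith)
    filter_upwards [hev] with n hn
    have hcast : ((n + 1 : ℕ) : ℤ) = (n : ℤ) + 1 := by push_cast; ring
    rw [hcast, key (n : ℤ) (Or.inl (haq_nonneg _ (Int.natCast_nonneg n))),
      Real.norm_eq_abs, Real.norm_eq_abs, abs_of_nonneg (htnonneg _),
      abs_of_nonneg (mul_nonneg (htnonneg _) (by positivity)), mul_comm ((‖x‖ + 1) / 2)]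
    exact mul_le_mul_of_nonneg_left hn.le (htnonneg _)
  -- negative side
  have Sneg : Summable (fun n : ℕ => t (-((n : ℤ) + 1))) := by
    by_cases hA : ∃ m : ℤ, a = (q:ℂ) ^ m
    · -- a is a power of q: the terms eventually vanish
      obtain ⟨m₀, hm⟩ := hA
      apply summable_of_ne_finset_zero (s := Finset.range m₀.toNat)
      intro n hn
      rw [Finset.mem_range, not_lt] at hn
      have hn' : m₀ ≤ (n : ℤ) + 1 := by omega
      have hzero : qPochC (q:ℂ) (a * (q:ℂ) ^ (-((n : ℤ) + 1))) = 0 := by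
        rw [qPochC_zpow_eq_zero_iff hq0 hq1]
        refine ⟨((n : ℤ) + 1 - m₀).toNat, ?_⟩
        rw [Int.toNat_of_nonneg (by omega), hm, ← zpow_add₀ hqc,
          show m₀ + (-((n : ℤ) + 1) + ((n : ℤ) + 1 - m₀)) = 0 by ring, zpow_zero]
      have hIa0 : qPochIntC (q:ℂ) a (-((n : ℤ) + 1)) = 0 := by
        rw [qPochIntC, hzero, div_zero]
      show ‖qPochIntC (q:ℂ) a (-((n : ℤ) + 1)) / qPochIntC (q:ℂ) b (-((n : ℤ) + 1))‖
          * ‖x‖ ^ (-((n : ℤ) + 1)) = 0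
      rw [hIa0, zero_div, norm_zero, zero_mul]
    · -- a is never a power of q
      push_neg at hA
      have haq : ∀ ν : ℤ, a * (q:ℂ) ^ ν ≠ 1 := by
        intro ν h
        apply hA (-ν)
        have h2 : a * (q:ℂ) ^ ν * (q:ℂ) ^ (-ν) = (q:ℂ) ^ (-ν) := by rw [h, one_mul]
        rwa [mul_assoc, ← zpow_add₀ hqc, add_neg_cancel, zpow_zero, mul_one] at h2
      set d : ℕ → ℝ := fun n =>
        ‖1 - b * (q:ℂ) ^ (-(n : ℤ) - 2)‖ /
          ‖1 - a * (q:ℂ) ^ (-(n : ℤ) - 2)‖ / ‖x‖ with hd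
      have key2 : ∀ n : ℕ, t (-(((n + 1 : ℕ) : ℤ) + 1)) = t (-((n : ℤ) + 1)) * d n := by
        intro n
        have h1a : ‖1 - a * (q:ℂ) ^ (-(n : ℤ) - 2)‖ ≠ 0 :=
          norm_ne_zero_iff.mpr (sub_ne_zero_of_ne (Ne.symm (haq _)))
        have h1b : ‖1 - b * (q:ℂ) ^ (-(n : ℤ) - 2)‖ ≠ 0 :=
          norm_ne_zero_iff.mpr (sub_ne_zero_of_ne (Ne.symm (hbq _)))
        have K := key (-(n : ℤ) - 2) (Or.inl (haq _))
        have hcast1 : -(n : ℤ) - 2 + 1 = -((n : ℤ) + 1) := by ring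
        have hcast2 : -(((n + 1 : ℕ) : ℤ) + 1) = -(n : ℤ) - 2 := by push_cast; ring
        rw [hcast1] at K
        rw [hcast2, K, hd, mul_assoc]
        have hcd : ‖1 - a * (q:ℂ) ^ (-(n : ℤ) - 2)‖ /
              ‖1 - b * (q:ℂ) ^ (-(n : ℤ) - 2)‖ * ‖x‖ *
            (‖1 - b * (q:ℂ) ^ (-(n : ℤ) - 2)‖ /
              ‖1 - a * (q:ℂ) ^ (-(n : ℤ) - 2)‖ / ‖x‖) = 1 := by
          field_simp
          exact div_self (norm_ne_zero_iff.mpr (sub_ne_zero_of_ne (by rw [mul_comm]; exact Ne.symm (hbq _))))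
        rw [hcd, mul_one]
      -- limit of d
      have hrw : ∀ n : ℕ, d n = ‖(q:ℂ) ^ (n + 2) - b‖ /
          ‖(q:ℂ) ^ (n + 2) - a‖ / ‖x‖ := by
        intro n
        have e : ∀ u : ℂ, 1 - u * (q:ℂ) ^ (-(n : ℤ) - 2) =
            (q:ℂ) ^ (-(n : ℤ) - 2) * ((q:ℂ) ^ (n + 2) - u) := by
          intro u
          rw [mul_sub, ← zpow_natCast (q:ℂ) (n + 2), ← zpow_add₀ hqc,
            show -(n : ℤ) - 2 + ((n : ℕ) + 2 : ℕ) = 0 by push_cast; ring, zpow_zero]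
          ring
        have habsq' : ‖(q:ℂ) ^ (-(n : ℤ) - 2)‖ ≠ 0 :=
          norm_ne_zero_iff.mpr (zpow_ne_zero _ hqc)
        rw [hd]
        simp only [e, norm_mul]
        rw [mul_div_mul_left _ _ habsq']
      have hq2 : Tendsto (fun n : ℕ => (q:ℂ) ^ (n + 2)) atTop (𝓝 0) := by
        have h0 : Tendsto (fun n : ℕ => (q:ℂ) ^ n) atTop (𝓝 0) :=
          tendsto_pow_atTop_nhds_zero_of_norm_lt_one
            (by rw [habs_q]; exact hq1)
        exact h0.comp (tendsto_add_atTop_nat 2)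
      have hta : Tendsto (fun n : ℕ => ‖(q:ℂ) ^ (n + 2) - a‖) atTop
          (𝓝 (‖a‖)) := by
        have := (continuous_norm.tendsto (-a)).comp
          (by simpa using hq2.sub_const a :
            Tendsto (fun n : ℕ => (q:ℂ) ^ (n + 2) - a) atTop (𝓝 (-a)))
        simpa [Function.comp_def] using this
      have htb : Tendsto (fun n : ℕ => ‖(q:ℂ) ^ (n + 2) - b‖) atTop
          (𝓝 (‖b‖)) := by
        have := (continuous_norm.tendsto (-b)).comp
          (by simpa using hq2.sub_const b :
            Tendsto (fun n : ℕ => (q:ℂ) ^ (n + 2) - b) atTop (𝓝 (-b)))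
        simpa [Function.comp_def] using this
      have haabs : ‖a‖ ≠ 0 := norm_ne_zero_iff.mpr ha
      have hlimd : Tendsto d atTop (𝓝 (‖b / a‖ / ‖x‖)) := by
        have := (htb.div hta haabs).div_const (‖x‖)
        rw [← norm_div] at this
        exact this.congr fun n => (hrw n).symm
      have hlt1 : ‖b / a‖ / ‖x‖ < 1 := by
        rw [div_lt_one hxabs]; exact hx1
      apply summable_of_ratio_norm_eventually_le
        (r := (‖b / a‖ / ‖x‖ + 1) / 2) (by linarith)
      have hev := hlimd.eventually_lt_const
        (show ‖b / a‖ / ‖x‖ <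
          (‖b / a‖ / ‖x‖ + 1) / 2 by linarith)
      filter_upwards [hev] with n hn
      have hdnn : 0 ≤ d n := by
        rw [hd]
        positivity
      rw [key2 n, Real.norm_eq_abs, Real.norm_eq_abs, abs_of_nonneg (htnonneg _),
        abs_of_nonneg (mul_nonneg (htnonneg _) hdnn),
        mul_comm ((‖b / a‖ / ‖x‖ + 1) / 2)]
      exact mul_le_mul_of_nonneg_left hn.le (htnonneg _)
  exact Summable.of_nat_of_neg_add_one Spos Sneg
end

section
/- The q-difference equation in α for the ₁ψ₁ Jackson integral: let 0<q<1, let α, β be real numbers with 0 < α and (α+1) + β < 1, and let ξ > 0 satisfy log_q ξ + β ∉ ℤ. Define I(α;ξ) := (1-q) ∑_{ν∈ℤ} (ξ q^ν)^α (q·ξq^ν)_∞ / (q^β·ξq^ν)_∞. Then I(α;ξ) = ((1 - q^{α+β})/(1 - q^{α})) · I(α+1;ξ). -/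
/-- The infinite q-shifted factorial `(u)_∞ = ∏_{l=0}^∞ (1 - u q^l)`. -/
noncomputable def qPoch (q u : ℝ) : ℝ := ∏' l : ℕ, (1 - u * q ^ l)

lemma abs_log_one_sub_le {x : ℝ} (hx : |x| ≤ 1/2) : |Real.log (1 - x)| ≤ 2 * |x| := by
  have h1 : |x| < 1 := lt_of_le_of_lt hx (by norm_num)
  have h := Real.abs_log_sub_add_sum_range_le h1 0
  simp only [Finset.range_zero, Finset.sum_empty, zero_add, pow_one] at h
  have h2 : (1:ℝ)/2 ≤ 1 - |x| := by linarith
  calc |Real.log (1 - x)| ≤ |x| / (1 - |x|) := h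
    _ ≤ |x| / (1/2) := by
        apply div_le_div_of_nonneg_left (abs_nonneg x) (by norm_num) h2
    _ = 2 * |x| := by ring

lemma qPoch_multipliable (q u : ℝ) (hq0 : 0 < q) (hq1 : q < 1) :
    Multipliable (fun l : ℕ => 1 - u * q ^ l) := by
  obtain ⟨k, hk⟩ : ∃ k : ℕ, |u| * q ^ k ≤ 1/2 := by
    have h := tendsto_pow_atTop_nhds_zero_of_lt_one hq0.le hq1
    have h2 := h.const_mul |u|
    rw [mul_zero] at h2
    have := h2.eventually_le_const (show (0:ℝ) < 1/2 by norm_num)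
    exact this.exists
  apply Multipliable.comp_nat_add (k := k)
  have hbound : ∀ n : ℕ, |u * q ^ (n + k)| ≤ (1/2) * q ^ n := by
    intro n
    rw [abs_mul, abs_pow, abs_of_pos hq0, pow_add, mul_comm (q^n), ← mul_assoc]
    exact mul_le_mul_of_nonneg_right hk (pow_nonneg hq0.le n)
  have hsmall : ∀ n : ℕ, |u * q ^ (n + k)| ≤ 1/2 := by
    intro n
    refine (hbound n).trans ?_
    have : q ^ n ≤ 1 := pow_le_one₀ hq0.le hq1.le
    nlinarith
  have hpos : ∀ n : ℕ, (0:ℝ) < 1 - u * q ^ (n + k) := by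
    intro n
    have := abs_le.mp (hsmall n)
    linarith [this.2]
  have hlog : Summable fun n : ℕ => Real.log (1 - u * q ^ (n + k)) := by
    apply Summable.of_abs
    apply Summable.of_nonneg_of_le (fun n => abs_nonneg _)
      (fun n => (abs_log_one_sub_le (hsmall n)).trans (by linarith [hbound n]))
      (summable_geometric_of_lt_one hq0.le hq1)
  exact Real.multipliable_of_summable_log (fun n => hpos n) hlog

lemma qPoch_rec (q u : ℝ) (hq0 : 0 < q) (hq1 : q < 1) :
    qPoch q u = (1 - u) * qPoch q (q * u) := by
  have hm : Multipliable fun n : ℕ => (fun l : ℕ => 1 - u * q ^ l) (n + 1) :=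
    (qPoch_multipliable q (q * u) hq0 hq1).congr fun n => by ring
  have h := tprod_eq_zero_mul' (f := fun l : ℕ => 1 - u * q ^ l) hm
  unfold qPoch
  rw [h]
  simp only [pow_zero, mul_one]
  congr 1
  exact tprod_congr fun n => by ring

noncomputable def Tt (q β ξ a : ℝ) (ν : ℤ) : ℝ :=
  (ξ * q ^ ν) ^ a * qPoch q (q * (ξ * q ^ ν)) / qPoch q (q ^ β * (ξ * q ^ ν))

noncomputable def St (q β ξ a : ℝ) (ν : ℤ) : ℝ :=
  (ξ * q ^ ν) ^ a * qPoch q (ξ * q ^ ν) / qPoch q (q ^ β * (ξ * q ^ ν))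

lemma hfac (q β ξ : ℝ) (hq0 : 0 < q) (hq1 : q < 1) (hξ : 0 < ξ)
    (hgen : ∀ m : ℤ, Real.logb q ξ + β ≠ m) (m : ℤ) :
    1 - q ^ β * (ξ * q ^ m) ≠ 0 := by
  intro h
  have hlq : Real.log q ≠ 0 := by
    have := Real.log_neg hq0 hq1
    linarith
  have heq : q ^ β * (ξ * q ^ m) = 1 := by linarith
  have hl := congrArg Real.log heq
  rw [Real.log_mul (by positivity) (by positivity), Real.log_mul hξ.ne' (by positivity),
      Real.log_rpow hq0, Real.log_zpow, Real.log_one] at hl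
  refine hgen (-m) ?_
  rw [Real.logb]
  push_cast
  field_simp
  linear_combination hl

lemma Tt_step (q β ξ : ℝ) (hq0 : 0 < q) (hq1 : q < 1) (hξ : 0 < ξ)
    (hgen : ∀ m : ℤ, Real.logb q ξ + β ≠ m) (a : ℝ) (ν : ℤ) :
    Tt q β ξ a (ν + 1) * (1 - q * (ξ * q ^ ν)) =
      q ^ a * ((1 - q ^ β * (ξ * q ^ ν)) * Tt q β ξ a ν) := by
  have hz : 0 < ξ * q ^ ν := mul_pos hξ (zpow_pos hq0 ν)
  have hzq : ξ * q ^ (ν + 1) = q * (ξ * q ^ ν) := by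
    rw [zpow_add_one₀ hq0.ne']; ring
  have hc := hfac q β ξ hq0 hq1 hξ hgen ν
  unfold Tt
  rw [hzq, Real.mul_rpow hq0.le hz.le,
      qPoch_rec q (q * (ξ * q ^ ν)) hq0 hq1,
      qPoch_rec q (q ^ β * (ξ * q ^ ν)) hq0 hq1,
      show q * (q ^ β * (ξ * q ^ ν)) = q ^ β * (q * (ξ * q ^ ν)) by ring]
  set P := qPoch q (q * (q * (ξ * q ^ ν)))
  set Q := qPoch q (q ^ β * (q * (ξ * q ^ ν)))
  by_cases hQ : Q = 0
  · simp [hQ]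
  · have hc' : 1 - ξ * q ^ ν * q ^ β ≠ 0 := by convert hc using 1; ring
    field_simp

lemma St_eq (q β ξ : ℝ) (hq0 : 0 < q) (hq1 : q < 1) (hξ : 0 < ξ) (a : ℝ) (ν : ℤ) :
    St q β ξ a ν = Tt q β ξ a ν - Tt q β ξ (a + 1) ν := by
  have hz : 0 < ξ * q ^ ν := mul_pos hξ (zpow_pos hq0 ν)
  unfold St Tt
  rw [qPoch_rec q (ξ * q ^ ν) hq0 hq1, Real.rpow_add hz, Real.rpow_one]
  ring

lemma St_succ (q β ξ : ℝ) (hq0 : 0 < q) (hq1 : q < 1) (hξ : 0 < ξ)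
    (hgen : ∀ m : ℤ, Real.logb q ξ + β ≠ m) (a : ℝ) (ν : ℤ) :
    St q β ξ a (ν + 1) = q ^ a * Tt q β ξ a ν - q ^ (a + β) * Tt q β ξ (a + 1) ν := by
  have hz : 0 < ξ * q ^ ν := mul_pos hξ (zpow_pos hq0 ν)
  have hzq : ξ * q ^ (ν + 1) = q * (ξ * q ^ ν) := by
    rw [zpow_add_one₀ hq0.ne']; ring
  have hc := hfac q β ξ hq0 hq1 hξ hgen ν
  unfold St Tt
  rw [hzq, Real.mul_rpow hq0.le hz.le, Real.rpow_add hz, Real.rpow_one,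
      Real.rpow_add hq0 a β,
      qPoch_rec q (q ^ β * (ξ * q ^ ν)) hq0 hq1,
      show q * (q ^ β * (ξ * q ^ ν)) = q ^ β * (q * (ξ * q ^ ν)) by ring]
  set P := qPoch q (q * (ξ * q ^ ν))
  set Q := qPoch q (q ^ β * (q * (ξ * q ^ ν)))
  by_cases hQ : Q = 0
  · simp [hQ]
  · have hc' : 1 - ξ * q ^ ν * q ^ β ≠ 0 := by convert hc using 1; ring
    field_simp

open Filter in
lemma Tt_summable (q β ξ : ℝ) (hq0 : 0 < q) (hq1 : q < 1) (hξ : 0 < ξ)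
    (hgen : ∀ m : ℤ, Real.logb q ξ + β ≠ m) (a : ℝ) (ha : 0 < a) (hab : a + β < 1) :
    Summable (fun ν : ℤ => Tt q β ξ a ν) := by
  have hqa1 : q ^ a < 1 := Real.rpow_lt_one hq0.le hq1 ha
  have hqa0 : 0 < q ^ a := Real.rpow_pos_of_pos hq0 a
  have hqb0 : 0 < q ^ β := Real.rpow_pos_of_pos hq0 β
  have hpow0 : Tendsto (fun n : ℕ => (q : ℝ) ^ n) atTop (nhds 0) :=
    tendsto_pow_atTop_nhds_zero_of_lt_one hq0.le hq1
  apply Summable.of_nat_of_neg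
  · -- forward direction
    set r : ℝ := (q ^ a + 1) / 2 with hr
    have hr1 : r < 1 := by rw [hr]; linarith
    apply summable_of_ratio_norm_eventually_le hr1
    have hz0 : Tendsto (fun n : ℕ => ξ * q ^ (n : ℤ)) atTop (nhds 0) := by
      have h2 := hpow0.const_mul ξ
      rw [mul_zero] at h2
      exact h2.congr fun n => by rw [zpow_natCast]
    have hc : Tendsto
        (fun n : ℕ => q ^ a * (1 - q ^ β * (ξ * q ^ (n:ℤ))) / (1 - q * (ξ * q ^ (n:ℤ))))
        atTop (nhds (q ^ a)) := by
      have h1 : Tendsto (fun n : ℕ => q ^ a * (1 - q ^ β * (ξ * q ^ (n:ℤ))))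
          atTop (nhds (q ^ a * (1 - q ^ β * 0))) :=
        (((hz0.const_mul (q ^ β)).const_sub 1).const_mul (q ^ a))
      have h2 : Tendsto (fun n : ℕ => 1 - q * (ξ * q ^ (n:ℤ))) atTop (nhds (1 - q * 0)) :=
        (hz0.const_mul q).const_sub 1
      have h3 := h1.div h2 (by norm_num)
      convert h3 using 2 <;> simp
    have hev1 : ∀ᶠ n : ℕ in atTop,
        |q ^ a * (1 - q ^ β * (ξ * q ^ (n:ℤ))) / (1 - q * (ξ * q ^ (n:ℤ)))| < r :=
      hc.abs.eventually_lt_const (by rw [abs_of_pos hqa0, hr]; linarith)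
    have hev2 : ∀ᶠ n : ℕ in atTop, 0 < 1 - q * (ξ * q ^ (n:ℤ)) := by
      have h2 : Tendsto (fun n : ℕ => 1 - q * (ξ * q ^ (n:ℤ))) atTop (nhds (1 - q * 0)) :=
        (hz0.const_mul q).const_sub 1
      rw [mul_zero, sub_zero] at h2
      exact h2.eventually_const_lt (by norm_num)
    filter_upwards [hev1, hev2] with n h1 h2
    have hstep := Tt_step q β ξ hq0 hq1 hξ hgen a (n : ℤ)
    have hne : (1 : ℝ) - q * (ξ * q ^ (n:ℤ)) ≠ 0 := ne_of_gt h2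
    have heq : Tt q β ξ a ((n:ℤ) + 1) =
        q ^ a * ((1 - q ^ β * (ξ * q ^ (n:ℤ))) * Tt q β ξ a (n:ℤ)) / (1 - q * (ξ * q ^ (n:ℤ))) :=
      (eq_div_iff hne).mpr hstep
    have heq2 : q ^ a * ((1 - q ^ β * (ξ * q ^ (n:ℤ))) * Tt q β ξ a (n:ℤ))
          / (1 - q * (ξ * q ^ (n:ℤ)))
        = q ^ a * (1 - q ^ β * (ξ * q ^ (n:ℤ))) / (1 - q * (ξ * q ^ (n:ℤ)))
          * Tt q β ξ a (n:ℤ) := by ring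
    have hcast : ((n + 1 : ℕ) : ℤ) = (n : ℤ) + 1 := by push_cast; ring
    rw [Real.norm_eq_abs, Real.norm_eq_abs, hcast, heq, heq2, abs_mul]
    exact mul_le_mul_of_nonneg_right h1.le (abs_nonneg _)
  · -- backward direction
    set L : ℝ := q / (q ^ a * q ^ β) with hL
    have hL0 : 0 < L := by positivity
    have hL1 : L < 1 := by
      rw [hL, div_lt_one (by positivity), ← Real.rpow_add hq0]
      calc q = q ^ (1:ℝ) := (Real.rpow_one q).symm
        _ < q ^ (a + β) := Real.rpow_lt_rpow_of_exponent_gt hq0 hq1 hab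
    set r : ℝ := (L + 1) / 2 with hr
    have hr1 : r < 1 := by rw [hr]; linarith
    apply summable_of_ratio_norm_eventually_le hr1
    have hw0 : Tendsto (fun n : ℕ => ξ⁻¹ * q ^ (n + 1 : ℕ)) atTop (nhds 0) := by
      have h2 := (hpow0.const_mul (ξ⁻¹ * q))
      rw [mul_zero] at h2
      exact h2.congr fun n => by rw [pow_succ]; ring
    have hd : Tendsto
        (fun n : ℕ => (ξ⁻¹ * q ^ (n + 1 : ℕ) - q) / (q ^ a * (ξ⁻¹ * q ^ (n + 1 : ℕ) - q ^ β)))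
        atTop (nhds ((0 - q) / (q ^ a * (0 - q ^ β)))) := by
      refine ((hw0.sub_const q).div ((hw0.sub_const (q ^ β)).const_mul (q ^ a)) ?_)
      simp only [zero_sub, mul_neg]
      exact neg_ne_zero.mpr (by positivity)
    have hLval : (0 - q) / (q ^ a * (0 - q ^ β)) = L := by
      rw [hL, zero_sub, zero_sub, mul_neg, neg_div_neg_eq]
    rw [hLval] at hd
    have hev : ∀ᶠ n : ℕ in atTop,
        |(ξ⁻¹ * q ^ (n + 1 : ℕ) - q) / (q ^ a * (ξ⁻¹ * q ^ (n + 1 : ℕ) - q ^ β))| < r :=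
      hd.abs.eventually_lt_const (by rw [abs_of_pos hL0, hr]; linarith)
    filter_upwards [hev] with n h1
    set z : ℝ := ξ * q ^ (-(n:ℤ) - 1) with hzdef
    have hz : 0 < z := mul_pos hξ (zpow_pos hq0 _)
    have hzinv : z⁻¹ = ξ⁻¹ * q ^ (n + 1 : ℕ) := by
      rw [hzdef, mul_inv, ← zpow_neg]
      congr 1
      rw [← zpow_natCast q (n + 1)]
      congr 1
      push_cast
      ring
    have hfc : 1 - q ^ β * z ≠ 0 := hfac q β ξ hq0 hq1 hξ hgen _
    have hzinvb : z⁻¹ - q ^ β ≠ 0 := by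
      have hexp : z⁻¹ - q ^ β = (1 - q ^ β * z) / z := by
        field_simp
      rw [hexp]
      exact div_ne_zero hfc hz.ne'
    have hden : q ^ a * (1 - q ^ β * z) ≠ 0 := mul_ne_zero hqa0.ne' hfc
    have hstep := Tt_step q β ξ hq0 hq1 hξ hgen a (-(n:ℤ) - 1)
    rw [show (-(n:ℤ) - 1) + 1 = -(n:ℤ) by ring, ← hzdef] at hstep
    have heq : Tt q β ξ a (-(n:ℤ) - 1)
        = Tt q β ξ a (-(n:ℤ)) * (1 - q * z) / (q ^ a * (1 - q ^ β * z)) := by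
      rw [eq_div_iff hden]
      linear_combination -hstep
    have hratio : (1 - q * z) / (q ^ a * (1 - q ^ β * z))
        = (z⁻¹ - q) / (q ^ a * (z⁻¹ - q ^ β)) := by
      rw [div_eq_div_iff hden (mul_ne_zero hqa0.ne' hzinvb)]
      field_simp
    have heq3 : Tt q β ξ a (-(n:ℤ) - 1)
        = (z⁻¹ - q) / (q ^ a * (z⁻¹ - q ^ β)) * Tt q β ξ a (-(n:ℤ)) := by
      rw [heq, ← hratio]
      ring
    have hcast : -((n + 1 : ℕ) : ℤ) = -(n:ℤ) - 1 := by push_cast; ring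
    rw [Real.norm_eq_abs, Real.norm_eq_abs, hcast, heq3, hzinv, abs_mul]
    exact mul_le_mul_of_nonneg_right h1.le (abs_nonneg _)

/-- The bilateral Jackson integral `I(α;ξ) = ∫_0^{ξ∞} z^α (qz)_∞/(q^β z)_∞ d_q z / z`. -/
noncomputable def ramanujanI (q β α ξ : ℝ) : ℝ :=
  (1 - q) * ∑' ν : ℤ, (ξ * q ^ ν) ^ α * qPoch q (q * (ξ * q ^ ν)) / qPoch q (q ^ β * (ξ * q ^ ν))

/-- The q-difference equation in `α` for the `₁ψ₁` Jackson integral. -/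
theorem one_psi_one_q_difference_equation (q α β ξ : ℝ) (hq0 : 0 < q) (hq1 : q < 1)
    (hα : 0 < α) (hαβ : (α + 1) + β < 1) (hξ : 0 < ξ)
    (hgen : ∀ m : ℤ, Real.logb q ξ + β ≠ m) :
    ramanujanI q β α ξ = ((1 - q ^ (α + β)) / (1 - q ^ α)) * ramanujanI q β (α + 1) ξ := by
  have hS1 : Summable (fun ν : ℤ => Tt q β ξ α ν) :=
    Tt_summable q β ξ hq0 hq1 hξ hgen α hα (by linarith)
  have hS2 : Summable (fun ν : ℤ => Tt q β ξ (α + 1) ν) :=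
    Tt_summable q β ξ hq0 hq1 hξ hgen (α + 1) (by linarith) (by linarith)
  have hshift : ∑' ν : ℤ, St q β ξ α (ν + 1) = ∑' ν : ℤ, St q β ξ α ν :=
    (Equiv.addRight (1 : ℤ)).tsum_eq (fun ν => St q β ξ α ν)
  have hleft : ∑' ν : ℤ, St q β ξ α (ν + 1)
      = q ^ α * (∑' ν : ℤ, Tt q β ξ α ν) - q ^ (α + β) * (∑' ν : ℤ, Tt q β ξ (α + 1) ν) := by
    rw [tsum_congr (fun ν => St_succ q β ξ hq0 hq1 hξ hgen α ν),
      Summable.tsum_sub (hS1.mul_left _) (hS2.mul_left _), tsum_mul_left, tsum_mul_left]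
  have hright : ∑' ν : ℤ, St q β ξ α ν
      = (∑' ν : ℤ, Tt q β ξ α ν) - ∑' ν : ℤ, Tt q β ξ (α + 1) ν := by
    rw [tsum_congr (fun ν => St_eq q β ξ hq0 hq1 hξ α ν), Summable.tsum_sub hS1 hS2]
  have hkey : q ^ α * (∑' ν : ℤ, Tt q β ξ α ν) - q ^ (α + β) * (∑' ν : ℤ, Tt q β ξ (α + 1) ν)
      = (∑' ν : ℤ, Tt q β ξ α ν) - ∑' ν : ℤ, Tt q β ξ (α + 1) ν := by
    rw [← hleft, hshift, hright]
  have hne : (1 : ℝ) - q ^ α ≠ 0 :=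
    ne_of_gt (by linarith [Real.rpow_lt_one hq0.le hq1 hα])
  have hIa : ramanujanI q β α ξ = (1 - q) * ∑' ν : ℤ, Tt q β ξ α ν := rfl
  have hIb : ramanujanI q β (α + 1) ξ = (1 - q) * ∑' ν : ℤ, Tt q β ξ (α + 1) ν := rfl
  rw [hIa, hIb, div_mul_eq_mul_div, eq_div_iff hne]
  linear_combination (q - 1) * hkey
end

section
/- Jackson-integral representation of the very-well-poised ₆ψ₆ series: let 0<q<1, let α₁,α₂,α₃,α₄ be real numbers with α₁+α₂+α₃+α₄ > 1, set a_i = q^{α_i}, and let ξ > 0 with ξ ≠ 1 and log_q ξ + α_m ∉ ℤ for m = 1,…,4 and 2 log_q ξ ∉ ℤ. Define Φ(z) := ∏_{i=1}^4 z^{1/2-α_i} (q z/a_i)_∞ / (z a_i)_∞, Δ(z) := z^{-1} - z, and J(ξ) := (1-q) ∑_{ν∈ℤ} Φ(ξ q^ν) Δ(ξ q^ν). Then the very-well-poised ₆ψ₆ series ∑_{ν∈ℤ} ((1 - ξ² q^{2ν})/(1-ξ²)) · ∏_{i=1}^4 ( (a_i ξ)_ν / (q ξ / a_i)_ν ) ·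 (q^{1-α₁-α₂-α₃-α₄})^ν equals ( ξ^{α₁+α₂+α₃+α₄-1} / ((1-q)(1-ξ²)) ) · ∏_{i=1}^4 ( (a_i ξ)_∞ / (q ξ / a_i)_∞ ) · J(ξ). -/
open Finset

/-- The q-shifted factorial `(u)_ν = (u)_∞ / (u q^ν)_∞` for `ν ∈ ℤ`. -/
noncomputable def qPochInt (q u : ℝ) (ν : ℤ) : ℝ := qPoch q u / qPoch q (u * q ^ ν)

/-- `Φ(z) = ∏_{i=1}^4 z^{1/2-α_i} (qz/a_i)_∞ / (z a_i)_∞` with `a_i = q^{α_i}`. -/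
noncomputable def PhiBC (q : ℝ) (α : Fin 4 → ℝ) (z : ℝ) : ℝ :=
  ∏ i : Fin 4, z ^ ((1 : ℝ) / 2 - α i) * qPoch q (q * z / q ^ α i) / qPoch q (z * q ^ α i)

/-- `Δ(z) = z⁻¹ - z`. -/
noncomputable def DeltaBC (z : ℝ) : ℝ := z⁻¹ - z

/-- The bilateral Jackson integral `J(ξ) = ∫_0^{ξ∞} Φ(z) Δ(z) d_q z / z`. -/
noncomputable def JBC (q : ℝ) (α : Fin 4 → ℝ) (ξ : ℝ) : ℝ :=
  (1 - q) * ∑' ν : ℤ, PhiBC q α (ξ * q ^ ν) * DeltaBC (ξ * q ^ ν)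

/-- Jackson-integral representation of the very-well-poised `₆ψ₆` series. -/
theorem six_psi_six_jackson_integral_representation (q : ℝ) (hq0 : 0 < q) (hq1 : q < 1)
    (α : Fin 4 → ℝ) (hα : 1 < α 0 + α 1 + α 2 + α 3)
    (ξ : ℝ) (hξ : 0 < ξ) (hξ1 : ξ ≠ 1)
    (hgen : ∀ m : Fin 4, ∀ k : ℤ, Real.logb q ξ + α m ≠ k)
    (hgen2 : ∀ k : ℤ, 2 * Real.logb q ξ ≠ k) :
    ∑' ν : ℤ,
        ((1 - ξ ^ 2 * q ^ (2 * ν)) / (1 - ξ ^ 2)) *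
          (∏ i : Fin 4, qPochInt q (q ^ α i * ξ) ν / qPochInt q (q * ξ / q ^ α i) ν) *
          (q ^ (1 - (α 0 + α 1 + α 2 + α 3))) ^ ν =
      (ξ ^ (α 0 + α 1 + α 2 + α 3 - 1) / ((1 - q) * (1 - ξ ^ 2))) *
        (∏ i : Fin 4, qPoch q (q ^ α i * ξ) / qPoch q (q * ξ / q ^ α i)) * JBC q α ξ := by
  have hq1' : (1:ℝ) - q ≠ 0 := by nlinarith
  have hξ2 : (1:ℝ) - ξ ^ 2 ≠ 0 := by
    intro h
    have h2 : (ξ - 1) * (ξ + 1) = 0 := by linear_combination -h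
    rcases mul_eq_zero.mp h2 with h3 | h3
    · exact hξ1 (by linarith)
    · linarith
  set s : ℝ := α 0 + α 1 + α 2 + α 3 with hs
  rw [JBC, ← tsum_mul_left, ← tsum_mul_left]
  refine tsum_congr fun ν => ?_
  have hqν : (0:ℝ) < q ^ ν := zpow_pos hq0 ν
  have hz : (0:ℝ) < ξ * q ^ ν := mul_pos hξ hqν
  -- factor identity for the Pochhammer ratios
  have key : ∀ i : Fin 4, qPochInt q (q ^ α i * ξ) ν / qPochInt q (q * ξ / q ^ α i) ν
      = (qPoch q (q ^ α i * ξ) / qPoch q (q * ξ / q ^ α i)) *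
        (qPoch q (q * (ξ * q ^ ν) / q ^ α i) / qPoch q (ξ * q ^ ν * q ^ α i)) := by
    intro i
    have e1 : q * ξ / q ^ α i * q ^ ν = q * (ξ * q ^ ν) / q ^ α i := by ring
    have e2 : q ^ α i * ξ * q ^ ν = ξ * q ^ ν * q ^ α i := by ring
    rw [qPochInt, qPochInt, e1, e2, div_div_div_comm, div_div_eq_mul_div, mul_div_assoc]
  simp only [key, Finset.prod_mul_distrib]
  -- unfold Phi and pull out the power part
  have hPhi : PhiBC q α (ξ * q ^ ν)
      = (ξ * q ^ ν) ^ ((2:ℝ) - s) *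
        ∏ i : Fin 4, qPoch q (q * (ξ * q ^ ν) / q ^ α i) / qPoch q (ξ * q ^ ν * q ^ α i) := by
    rw [PhiBC]
    simp only [mul_div_assoc]
    rw [Finset.prod_mul_distrib]
    congr 1
    rw [Fin.prod_univ_four, ← Real.rpow_add hz, ← Real.rpow_add hz, ← Real.rpow_add hz]
    congr 1
    rw [hs]; ring
  rw [hPhi, DeltaBC]
  -- scalar identity
  have hgenpow : ∀ a b : ℝ, ξ ^ a * (ξ * q ^ ν) ^ b = ξ ^ (a + b) * q ^ (b * (ν:ℝ)) := by
    intro a b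
    rw [Real.mul_rpow hξ.le hqν.le, Real.rpow_add hξ, ← Real.rpow_intCast q ν,
      ← Real.rpow_mul hq0.le, mul_comm (ν:ℝ) b]
    ring
  have hzpow : ∀ c : ℝ, (q ^ c) ^ ν = q ^ (c * (ν:ℝ)) := by
    intro c
    rw [← Real.rpow_intCast (q ^ c) ν, ← Real.rpow_mul hq0.le]
  have h2ν : (q:ℝ) ^ (2 * ν) = q ^ ((2:ℝ) * (ν:ℝ)) := by
    rw [← Real.rpow_intCast q (2*ν)]; push_cast; ring_nf
  have e1 : ξ ^ (s - 1) * (ξ * q ^ ν) ^ ((1:ℝ) - s) = (q ^ (1 - s)) ^ ν := by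
    rw [hgenpow, hzpow]
    norm_num
  have e2 : ξ ^ (s - 1) * (ξ * q ^ ν) ^ ((3:ℝ) - s) = ξ ^ 2 * q ^ (2 * ν) * (q ^ (1 - s)) ^ ν := by
    rw [hgenpow, hzpow, h2ν]
    have : s - 1 + (3 - s) = (2:ℝ) := by ring
    rw [this]
    rw [show (3 - s) * (ν:ℝ) = 2 * (ν:ℝ) + (1 - s) * (ν:ℝ) by ring, Real.rpow_add hq0,
      show (2:ℝ) = ((2:ℕ):ℝ) by norm_num, Real.rpow_natCast]
    ring
  have hsplit : (ξ * q ^ ν) ^ ((2:ℝ) - s) * ((ξ * q ^ ν)⁻¹ - ξ * q ^ ν)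
      = (ξ * q ^ ν) ^ ((1:ℝ) - s) - (ξ * q ^ ν) ^ ((3:ℝ) - s) := by
    rw [mul_sub, ← Real.rpow_neg_one (ξ * q ^ ν), ← Real.rpow_add hz,
      ← Real.rpow_add_one hz.ne' ((2:ℝ) - s),
      show (2:ℝ) - s + -1 = 1 - s by ring, show (2:ℝ) - s + 1 = 3 - s by ring]
  have hscal : (1 - ξ ^ 2 * q ^ (2 * ν)) / (1 - ξ ^ 2) * (q ^ (1 - s)) ^ ν
      = ξ ^ (s - 1) / ((1 - q) * (1 - ξ ^ 2)) *
        ((1 - q) * ((ξ * q ^ ν) ^ ((2:ℝ) - s) * ((ξ * q ^ ν)⁻¹ - ξ * q ^ ν))) := by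
    have expand : ξ ^ (s - 1) * ((ξ * q ^ ν) ^ ((1:ℝ) - s) - (ξ * q ^ ν) ^ ((3:ℝ) - s))
        = (q ^ (1 - s)) ^ ν * (1 - ξ ^ 2 * q ^ (2 * ν)) := by
      rw [mul_sub, e1, e2]; ring
    rw [hsplit]
    field_simp
    linear_combination (-1 : ℝ) * expand
  calc (1 - ξ ^ 2 * q ^ (2 * ν)) / (1 - ξ ^ 2) *
        ((∏ i : Fin 4, qPoch q (q ^ α i * ξ) / qPoch q (q * ξ / q ^ α i)) *
          ∏ i : Fin 4, qPoch q (q * (ξ * q ^ ν) / q ^ α i) / qPoch q (ξ * q ^ ν * q ^ α i)) *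
        (q ^ (1 - s)) ^ ν
      = ((1 - ξ ^ 2 * q ^ (2 * ν)) / (1 - ξ ^ 2) * (q ^ (1 - s)) ^ ν) *
        ((∏ i : Fin 4, qPoch q (q ^ α i * ξ) / qPoch q (q * ξ / q ^ α i)) *
          ∏ i : Fin 4, qPoch q (q * (ξ * q ^ ν) / q ^ α i) / qPoch q (ξ * q ^ ν * q ^ α i)) := by
        ring
    _ = _ := by rw [hscal]; ring
end
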